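/- If R = ⟨R_0, R_1, …⟩ is a uniformly computable sequence of subsets of ω and C is an R-cohesive set, and f : ω × ω → {0,1} is a computable function such that for each i ∈ {0,1} and each x, the set {s : f(x,s) = i} is infinite iff x ∉ A_i (where A_0, A_1 are disjoint Σ⁰₂ sets, and R_x(s) holds iff f(x,s) = 1), then the set D = {x : f(x,c) = 1 for all but finitely many c ∈ C} is a Δ⁰₂(C) set separating A_0 from A_1, i.e., A_0 ⊆ D and D ∩ A_1 = ∅. -/

import Mathlib

open Classical

/-- Codes for oracle Turing machines: partial recursive functions relative to an oracle. -/
inductive CodeO : Type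
  | zero : CodeO
  | succ : CodeO
  | left : CodeO
  | right : CodeO
  | oracle : CodeO
  | pair : CodeO → CodeO → CodeO
  | comp : CodeO → CodeO → CodeO
  | prec : CodeO → CodeO → CodeO
  | rfind' : CodeO → CodeO

/-- Evaluation of an oracle code with oracle `O`, following `Nat.Partrec.Code.eval`. -/
def evalo (O : ℕ → Bool) : CodeO → ℕ →. ℕ
  | CodeO.zero => pure 0
  | CodeO.succ => fun n => Part.some (n + 1)
  | CodeO.left => fun n => Part.some (Nat.unpair n).1
  | CodeO.right => fun n => Part.some (Nat.unpair n).2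
  | CodeO.oracle => fun n => Part.some (cond (O n) 1 0)
  | CodeO.pair cf cg => fun n => Nat.pair <$> evalo O cf n <*> evalo O cg n
  | CodeO.comp cf cg => fun n => evalo O cg n >>= evalo O cf
  | CodeO.prec cf cg =>
    Nat.unpaired fun a n =>
      n.rec (evalo O cf a) fun y IH => do
        let i ← IH
        evalo O cg (Nat.pair a (Nat.pair y i))
  | CodeO.rfind' cf =>
    Nat.unpaired fun a m =>
      (Nat.rfind fun n => (fun m => m = 0) <$> evalo O cf (Nat.pair a (n + m))).map (· + m)

/-- A Gödel numbering of oracle codes. -/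
def encodeCodeO : CodeO → ℕ
  | CodeO.zero => 0
  | CodeO.succ => 1
  | CodeO.left => 2
  | CodeO.right => 3
  | CodeO.oracle => 4
  | CodeO.pair cf cg => 4 * (2 * (2 * Nat.pair (encodeCodeO cf) (encodeCodeO cg))) + 5
  | CodeO.comp cf cg => 4 * (2 * (2 * Nat.pair (encodeCodeO cf) (encodeCodeO cg) + 1)) + 5
  | CodeO.prec cf cg => 4 * (2 * (2 * Nat.pair (encodeCodeO cf) (encodeCodeO cg)) + 1) + 5
  | CodeO.rfind' cf => 4 * (2 * (2 * encodeCodeO cf + 1) + 1) + 5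

/-- The Turing jump `A' = {e : Φ_e^A(e) ↓}`. -/
noncomputable def jump (A : ℕ → Bool) : ℕ → Bool :=
  fun e => decide (∃ c : CodeO, encodeCodeO c = e ∧ (evalo A c e).Dom)

/-- `A` is Turing reducible to `B`. -/
def TuringRedTo (A B : ℕ → Bool) : Prop :=
  ∃ c : CodeO, ∀ n, evalo B c n = Part.some (cond (A n) 1 0)

/-- Turing equivalence. -/
def TuringEquiv (A B : ℕ → Bool) : Prop := TuringRedTo A B ∧ TuringRedTo B A

/-- The recursive join `A ⊕ B`. -/
def join (A B : ℕ → Bool) : ℕ → Bool :=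
  fun n => if n % 2 = 0 then A (n / 2) else B (n / 2)

/-- The halting problem `0'`. -/
noncomputable def zeroJump : ℕ → Bool := jump (fun _ => false)

/-- `A` is weak truth-table reducible to `B`: a Turing reduction whose oracle use
on input `n` is bounded by `f n` for a total computable `f`. -/
def WttRedTo (A B : ℕ → Bool) : Prop :=
  ∃ f : ℕ → ℕ, Computable f ∧ ∃ c : CodeO,
    ∀ n, ∀ B2 : ℕ → Bool, (∀ y < f n, B2 y = B y) →
      evalo B2 c n = Part.some (cond (A n) 1 0)

/-- The initial segment of length `n` of an infinite binary sequence. -/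
def seg (P : ℕ → Bool) (n : ℕ) : List Bool := (List.range n).map P

/-- `T` (a set of binary strings given by its characteristic function) is a tree:
closed under initial segments. -/
def IsTree (T : List Bool → Bool) : Prop :=
  ∀ σ τ : List Bool, σ <+: τ → T τ = true → T σ = true

/-- `T` is infinite: it contains strings of every length. -/
def TreeInfinite (T : List Bool → Bool) : Prop :=
  ∀ n, ∃ σ : List Bool, σ.length = n ∧ T σ = true

/-- The `n`-th level of the arithmetical hierarchy relative to oracle `A`:
`SigmaIn A 0 B` means `B` is `A`-computable, and `SigmaIn A (n+1) B` means
`B x ↔ ∃ y, R ⟨x,y⟩` for a `Π_n^A` relation `R`. -/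
def SigmaIn (A : ℕ → Bool) : ℕ → Set ℕ → Prop
  | 0, B => ∃ b : ℕ → Bool, TuringRedTo b A ∧ ∀ n, n ∈ B ↔ b n = true
  | n + 1, B => ∃ R : Set ℕ, SigmaIn A n {m | m ∉ R} ∧ ∀ x, x ∈ B ↔ ∃ y, Nat.pair x y ∈ R

/-- `C` is cohesive for the sequence of sets `R`: `C` is infinite and for each `k`,
either `C ∖ R_k` or `C ∩ R_k` is finite. -/
def Cohesive (R : ℕ → ℕ → Bool) (C : Set ℕ) : Prop :=
  C.Infinite ∧ ∀ k, (C \ {x | R k x = true}).Finite ∨ (C ∩ {x | R k x = true}).Finite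

/-- `T`, a function on binary strings, is computable in oracle `X`. -/
def ComputesStrFun (X : ℕ → Bool) (T : List Bool → Bool) : Prop :=
  ∃ c : CodeO, ∀ σ : List Bool, evalo X c (Encodable.encode σ) = Part.some (cond (T σ) 1 0)

/-- `Y` is of PA degree relative to `X`: every infinite `X`-computable binary tree
has a `Y`-computable infinite path. -/
def PAOver (Y X : ℕ → Bool) : Prop :=
  ∀ T : List Bool → Bool, ComputesStrFun X T → IsTree T → TreeInfinite T →
    ∃ P : ℕ → Bool, (∀ n, T (seg P n) = true) ∧ TuringRedTo P Y

/-- Translate an ordinary partial recursive code into an oracle code. -/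
def toCodeO : Nat.Partrec.Code → CodeO
  | Nat.Partrec.Code.zero => CodeO.zero
  | Nat.Partrec.Code.succ => CodeO.succ
  | Nat.Partrec.Code.left => CodeO.left
  | Nat.Partrec.Code.right => CodeO.right
  | Nat.Partrec.Code.pair a b => CodeO.pair (toCodeO a) (toCodeO b)
  | Nat.Partrec.Code.comp a b => CodeO.comp (toCodeO a) (toCodeO b)
  | Nat.Partrec.Code.prec a b => CodeO.prec (toCodeO a) (toCodeO b)
  | Nat.Partrec.Code.rfind' a => CodeO.rfind' (toCodeO a)

theorem evalo_toCodeO (O : ℕ → Bool) : ∀ c, evalo O (toCodeO c) = c.eval := by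
  intro c
  induction c with
  | zero => rfl
  | succ => rfl
  | left => rfl
  | right => rfl
  | pair a b iha ihb => simp [toCodeO, evalo, Nat.Partrec.Code.eval, iha, ihb]; rfl
  | comp a b iha ihb => simp [toCodeO, evalo, Nat.Partrec.Code.eval, iha, ihb]; rfl
  | prec a b iha ihb => simp [toCodeO, evalo, Nat.Partrec.Code.eval, iha, ihb]; rfl
  | rfind' a iha => simp [toCodeO, evalo, Nat.Partrec.Code.eval, iha]; rfl

theorem exists_codeO {f : ℕ → ℕ} (hf : Computable f) (O : ℕ → Bool) :
    ∃ c : CodeO, ∀ n, evalo O c n = Part.some (f n) := by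
  have h : Nat.Partrec fun n => Part.some (f n) := Partrec.nat_iff.1 hf
  obtain ⟨c, hc⟩ := Nat.Partrec.Code.exists_code.1 h
  exact ⟨toCodeO c, fun n => by rw [evalo_toCodeO, hc]⟩

theorem redto (O : ℕ → Bool) (g s : ℕ → ℕ) (hg : Computable g) (hs : Computable s) :
    ∃ c : CodeO, ∀ n, evalo O c n = Part.some (g (Nat.pair n (cond (O (s n)) 1 0))) := by
  obtain ⟨cg, hcg⟩ := exists_codeO hg O
  obtain ⟨cs, hcs⟩ := exists_codeO hs O
  obtain ⟨cid, hcid⟩ := exists_codeO (Computable.id (α := ℕ)) O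
  refine ⟨CodeO.comp cg (CodeO.pair cid (CodeO.comp CodeO.oracle cs)), fun n => ?_⟩
  simp [evalo, hcg, hcs, hcid, Seq.seq]
  exact (Part.bind_some _ _).trans (hcg _)

theorem redto_bool (O : ℕ → Bool) (p : ℕ → ℕ → Bool) (s : ℕ → ℕ)
    (hp : Computable₂ p) (hs : Computable s) :
    TuringRedTo (fun n => p n (cond (O (s n)) 1 0)) O := by
  have hg : Computable (fun m => cond (p m.unpair.1 m.unpair.2) 1 0 : ℕ → ℕ) :=
    Computable.cond
      (hp.comp (Computable.fst.comp Computable.unpair) (Computable.snd.comp Computable.unpair))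
      (Computable.const 1) (Computable.const 0)
  obtain ⟨c, hc⟩ := redto O _ s hg hs
  exact ⟨c, fun n => by simpa [Nat.unpair_pair] using hc n⟩

theorem nat_finite_iff {S : Set ℕ} : S.Finite ↔ ∃ y, ∀ s ∈ S, s < y := by
  constructor
  · intro h
    obtain ⟨y, hy⟩ := h.bddAbove
    exact ⟨y + 1, fun s hs => Nat.lt_succ_of_le (hy hs)⟩
  · rintro ⟨y, hy⟩
    exact (Set.finite_lt_nat y).subset fun s hs => hy s hs

def pAux (g : ℕ → ℕ → Bool) : ℕ → ℕ → Bool := fun k o =>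
  decide (k.unpair.1.unpair.2 ≤ k.unpair.2) && decide (o = 1) &&
    !(g k.unpair.1.unpair.1 k.unpair.2)

theorem pAux_comp {g : ℕ → ℕ → Bool} (hg : Computable₂ g) :
    Computable₂ fun k o => !(pAux g k o) := by
  have e1 : Computable fun m : ℕ × ℕ => m.1.unpair.1.unpair.2 :=
    Computable.snd.comp (Computable.unpair.comp
      (Computable.fst.comp (Computable.unpair.comp Computable.fst)))
  have e2 : Computable fun m : ℕ × ℕ => m.1.unpair.2 :=
    Computable.snd.comp (Computable.unpair.comp Computable.fst)
  have e3 : Computable fun m : ℕ × ℕ => m.1.unpair.1.unpair.1 :=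
    Computable.fst.comp (Computable.unpair.comp
      (Computable.fst.comp (Computable.unpair.comp Computable.fst)))
  have h1 : Computable fun m : ℕ × ℕ => decide (m.1.unpair.1.unpair.2 ≤ m.1.unpair.2) :=
    (Primrec₂.to_comp Primrec.nat_le.decide).comp e1 e2
  have h2 : Computable fun m : ℕ × ℕ => decide (m.2 = 1) :=
    (Primrec₂.to_comp Primrec.eq.decide).comp Computable.snd (Computable.const 1)
  have h3 : Computable fun m : ℕ × ℕ => !(g m.1.unpair.1.unpair.1 m.1.unpair.2) :=
    Primrec.not.to_comp.comp (hg.comp e3 e2)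
  have : Computable fun m : ℕ × ℕ => !(pAux g m.1 m.2) :=
    Primrec.not.to_comp.comp
      ((Primrec₂.to_comp Primrec.and).comp
        ((Primrec₂.to_comp Primrec.and).comp h1 h2) h3)
  exact this

theorem sigma2_finite (C : ℕ → Bool) (g : ℕ → ℕ → Bool) (hg : Computable₂ g) :
    SigmaIn C 2 {x | ({n | C n = true} ∩ {s | g x s = false}).Finite} := by
  classical
  set b : ℕ → Bool := fun k => pAux g k (cond (C k.unpair.2) 1 0) with hbdef
  have hb : ∀ x y s, b (Nat.pair (Nat.pair x y) s) = true ↔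
      (y ≤ s ∧ C s = true ∧ g x s = false) := by
    intro x y s
    simp only [hbdef, pAux, Nat.unpair_pair, Bool.and_eq_true, decide_eq_true_eq,
      Bool.not_eq_true', and_assoc]
    cases C s <;> simp
  refine ⟨{m | ∀ s, b (Nat.pair m s) = false},
    ⟨{k | b k = true}, ⟨fun k => !(b k), ?_, ?_⟩, ?_⟩, ?_⟩
  · exact redto_bool C (fun k o => !(pAux g k o)) (fun k => k.unpair.2) (pAux_comp hg)
      (Computable.snd.comp Computable.unpair)
  · intro n
    simp [Set.mem_setOf_eq]
  · intro m
    simp only [Set.mem_setOf_eq, not_forall]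
    constructor
    · rintro ⟨s, hs⟩; exact ⟨s, by simpa using hs⟩
    · rintro ⟨s, hs⟩; exact ⟨s, by simpa using hs⟩
  · intro x
    simp only [Set.mem_setOf_eq]
    rw [nat_finite_iff]
    constructor
    · rintro ⟨y, hy⟩
      refine ⟨y, fun s => ?_⟩
      rw [Bool.eq_false_iff, Ne, hb]
      rintro ⟨h1, h2, h3⟩
      exact absurd h1 (Nat.not_le_of_lt (hy s ⟨h2, h3⟩))
    · rintro ⟨y, hy⟩
      refine ⟨y + 1, fun s hs => ?_⟩
      have := hy s
      rw [Bool.eq_false_iff, Ne, hb] at this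
      by_contra hlt
      exact this ⟨by omega, hs.1, hs.2⟩

/-- given disjoint `Σ⁰₂` sets `A₀, A₁`, a computable `f` with
`{s : f(x,s)=i}` infinite iff `x ∉ A_i`, and an `R`-cohesive set `C` for the sequence
`R_x(s) ⇔ f(x,s)=1`, the set `D = {x : f(x,c)=1 for all but finitely many c ∈ C}` is a
`Δ⁰₂(C)` set separating `A₀` from `A₁`. -/
theorem cohesive_separation (A0 A1 : Set ℕ)
    (hA0 : SigmaIn (fun _ => false) 2 A0) (hA1 : SigmaIn (fun _ => false) 2 A1)
    (hdisj : Disjoint A0 A1)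
    (f : ℕ → ℕ → Bool) (hf : Computable₂ f)
    (h0 : ∀ x, {s | f x s = false}.Infinite ↔ x ∉ A0)
    (h1 : ∀ x, {s | f x s = true}.Infinite ↔ x ∉ A1)
    (C : ℕ → Bool)
    (hcoh : Cohesive (fun x s => f x s) {n | C n = true}) :
    let D : Set ℕ := {x | ({n | C n = true} ∩ {s | f x s = false}).Finite}
    A0 ⊆ D ∧ D ∩ A1 = ∅ ∧ SigmaIn C 2 D ∧ SigmaIn C 2 Dᶜ := by
  intro D
  obtain ⟨hCinf, hcoh2⟩ := hcoh
  have hsub : A0 ⊆ D := by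
    intro x hx
    show ({n | C n = true} ∩ {s | f x s = false}).Finite
    have hfin : ¬{s | f x s = false}.Infinite := by
      rw [h0 x]; simpa using hx
    exact Set.Finite.inter_of_right (Set.not_infinite.1 hfin) _
  have hDA1 : D ∩ A1 = ∅ := by
    ext x
    simp only [Set.mem_inter_iff, Set.mem_empty_iff_false, iff_false]
    rintro ⟨hxD, hxA1⟩
    have hxD' : ({n | C n = true} ∩ {s | f x s = false}).Finite := hxD
    have hfin1 : {s | f x s = true}.Finite :=
      Set.not_infinite.1 (fun h => (h1 x).1 h hxA1)
    have hsubU : {n | C n = true} ⊆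
        ({n | C n = true} ∩ {s | f x s = false}) ∪ {s | f x s = true} := by
      intro n hn
      cases hfx : f x n
      · exact Or.inl ⟨hn, hfx⟩
      · exact Or.inr hfx
    exact hCinf ((hxD'.union hfin1).subset hsubU)
  have hDc : Dᶜ = {x | ({n | C n = true} ∩ {s | (!(f x s)) = false}).Finite} := by
    ext x
    simp only [Set.mem_compl_iff, Set.mem_setOf_eq, Bool.not_eq_false', D]
    constructor
    · intro hx
      rcases hcoh2 x with h | h
      · exfalso
        apply hx
        apply h.subset
        rintro n ⟨hn1, hn2⟩
        simp only [Set.mem_setOf_eq] at hn2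
        exact ⟨hn1, by simp [Set.mem_setOf_eq, hn2]⟩
      · exact h
    · intro htrue hfalse
      apply hCinf
      have hsubU : {n | C n = true} ⊆
          ({n | C n = true} ∩ {s | f x s = false}) ∪
            ({n | C n = true} ∩ {s | f x s = true}) := by
        intro n hn
        cases hfx : f x n
        · exact Or.inl ⟨hn, hfx⟩
        · exact Or.inr ⟨hn, hfx⟩
      exact (hfalse.union htrue).subset hsubU
  have hnf : Computable₂ fun x s => !(f x s) := by
    have : Computable fun m : ℕ × ℕ => !(f m.1 m.2) := Primrec.not.to_comp.comp hf
    exact this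
  refine ⟨hsub, hDA1, sigma2_finite C f hf, ?_⟩
  rw [hDc]
  exact sigma2_finite C (fun x s => !(f x s)) hnf
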